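/- Fix t ∈ ℝ and set h s = ⟪γ s, n s⟫ and Δ = det(n t, deriv n t, iteratedDeriv 2 n t). Assume Δ ≠ 0 and let x ∈ E be the unique point satisfying ⟪x, n t⟫ = h t, ⟪x, deriv n t⟫ = deriv h t, ⟪x, iteratedDeriv 2 n t⟫ = iteratedDeriv 2 h t. Then x = γ t if and only if κ2 t = 0. (That is, the point of the singular locus of the boundary-envelope corresponding to t coincides with the boundary point γ t exactly at osculating-tangent points, where the normal curvature κ2 vanishes.) -/

import Mathlib

open scoped RealInnerProductSpace

noncomputable def cross3 (u v : EuclideanSpace ℝ (Fin 3)) : EuclideanSpace ℝ (Fin 3) :=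
  (WithLp.equiv 2 (Fin 3 → ℝ)).symm
    ![u 1 * v 2 - u 2 * v 1, u 2 * v 0 - u 0 * v 2, u 0 * v 1 - u 1 * v 0]

noncomputable def det3 (u v w : EuclideanSpace ℝ (Fin 3)) : ℝ :=
  Matrix.det (Matrix.of (fun i j => ![u, v, w] j i))

theorem stmt11
    (γ e1 e2 e3 : ℝ → EuclideanSpace ℝ (Fin 3)) (κ1 κ2 κ3 : ℝ → ℝ)
    (hγ : ContDiff ℝ (⊤ : ℕ∞) γ)
    (he1s : ContDiff ℝ (⊤ : ℕ∞) e1) (he2s : ContDiff ℝ (⊤ : ℕ∞) e2)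
    (he3s : ContDiff ℝ (⊤ : ℕ∞) e3)
    (hκ1s : ContDiff ℝ (⊤ : ℕ∞) κ1) (hκ2s : ContDiff ℝ (⊤ : ℕ∞) κ2)
    (hκ3s : ContDiff ℝ (⊤ : ℕ∞) κ3)
    (he1 : e1 = deriv γ)
    (hON : ∀ t, Orthonormal ℝ ![e1 t, e2 t, e3 t])
    (hor : ∀ t, e3 t = cross3 (e1 t) (e2 t))
    (hE1 : ∀ t, deriv e1 t = κ1 t • e2 t + κ2 t • e3 t)
    (hE2 : ∀ t, deriv e2 t = (-(κ1 t)) • e1 t + κ3 t • e3 t)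
    (hE3 : ∀ t, deriv e3 t = (-(κ2 t)) • e1 t - κ3 t • e2 t)
    (t : ℝ)
    (hΔ : det3 (e3 t) (deriv e3 t) (iteratedDeriv 2 e3 t) ≠ 0)
    (x : EuclideanSpace ℝ (Fin 3))
    (hx1 : ⟪x, e3 t⟫ = ⟪γ t, e3 t⟫)
    (hx2 : ⟪x, deriv e3 t⟫ = deriv (fun s => ⟪γ s, e3 s⟫) t)
    (hx3 : ⟪x, iteratedDeriv 2 e3 t⟫ = iteratedDeriv 2 (fun s => ⟪γ s, e3 s⟫) t) :
    x = γ t ↔ κ2 t = 0 := by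
  -- orthonormality facts
  have hONite : ∀ s : ℝ, ∀ i j : Fin 3,
      ⟪![e1 s, e2 s, e3 s] i, ![e1 s, e2 s, e3 s] j⟫ = if i = j then (1:ℝ) else 0 := by
    intro s; exact orthonormal_iff_ite.mp (hON s)
  have h13 : ∀ s, ⟪e1 s, e3 s⟫ = (0:ℝ) := fun s => by simpa using hONite s 0 2
  have h23 : ∀ s, ⟪e2 s, e3 s⟫ = (0:ℝ) := fun s => by simpa using hONite s 1 2
  have h33 : ∀ s, ⟪e3 s, e3 s⟫ = (1:ℝ) := fun s => by simpa using hONite s 2 2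
  have h11 : ∀ s, ⟪e1 s, e1 s⟫ = (1:ℝ) := fun s => by simpa using hONite s 0 0
  have h12 : ∀ s, ⟪e1 s, e2 s⟫ = (0:ℝ) := fun s => by simpa using hONite s 0 1
  -- differentiability
  have hγd : ∀ s, HasDerivAt γ (e1 s) s := fun s => by
    rw [he1]; exact (hγ.differentiable (by simp) s).hasDerivAt
  have he1d : ∀ s, HasDerivAt e1 (deriv e1 s) s := fun s =>
    (he1s.differentiable (by simp) s).hasDerivAt
  have he3d : ∀ s, HasDerivAt e3 (deriv e3 s) s := fun s =>
    (he3s.differentiable (by simp) s).hasDerivAt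
  -- deriv e3 is smooth
  have hd3fun : deriv e3 = fun s => (-(κ2 s)) • e1 s - κ3 s • e2 s := funext hE3
  have hd3s : ContDiff ℝ (⊤ : ℕ∞) (deriv e3) := by
    rw [hd3fun]
    exact (hκ2s.neg.smul he1s).sub (hκ3s.smul he2s)
  have hd3d : ∀ s, HasDerivAt (deriv e3) (deriv (deriv e3) s) s := fun s =>
    (hd3s.differentiable (by simp) s).hasDerivAt
  -- first derivative of h
  have hder : deriv (fun s => ⟪γ s, e3 s⟫) = fun s => ⟪γ s, deriv e3 s⟫ + ⟪e1 s, e3 s⟫ := by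
    funext s
    exact ((hγd s).inner ℝ (he3d s)).deriv
  -- second derivative
  have hit2 : iteratedDeriv 2 e3 t = deriv (deriv e3) t := by
    rw [iteratedDeriv_succ, iteratedDeriv_one]
  have hsecond : iteratedDeriv 2 (fun s => ⟪γ s, e3 s⟫) t
      = ⟪γ t, iteratedDeriv 2 e3 t⟫ - κ2 t := by
    rw [iteratedDeriv_succ, iteratedDeriv_one, hder]
    have H1 : HasDerivAt (fun s => ⟪γ s, deriv e3 s⟫)
        (⟪γ t, deriv (deriv e3) t⟫ + ⟪e1 t, deriv e3 t⟫) t :=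
      (hγd t).inner ℝ (hd3d t)
    have H2 : HasDerivAt (fun s => ⟪e1 s, e3 s⟫)
        (⟪e1 t, deriv e3 t⟫ + ⟪deriv e1 t, e3 t⟫) t :=
      (he1d t).inner ℝ (he3d t)
    have := (H1.add H2).deriv
    rw [show (fun s => ⟪γ s, deriv e3 s⟫ + ⟪e1 s, e3 s⟫) = (fun s => ⟪γ s, deriv e3 s⟫) + (fun s => ⟪e1 s, e3 s⟫) from rfl, this, hit2]
    have hv1 : ⟪e1 t, deriv e3 t⟫ = -κ2 t := by
      rw [hE3 t, inner_sub_right, inner_smul_right, inner_smul_right, h11, h12]; ring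
    have hv2 : ⟪deriv e1 t, e3 t⟫ = κ2 t := by
      rw [hE1 t, inner_add_left, inner_smul_left, inner_smul_left, h23, h33]
      simp
    rw [hv1, hv2]; ring
  -- the three key equations for y = x - γ t
  have key1 : ⟪x - γ t, e3 t⟫ = 0 := by rw [inner_sub_left, hx1]; ring
  have key2 : ⟪x - γ t, deriv e3 t⟫ = 0 := by
    rw [inner_sub_left, hx2, hder]
    simp only [h13]; ring
  have key3 : ⟪x - γ t, iteratedDeriv 2 e3 t⟫ = -κ2 t := by
    rw [inner_sub_left, hx3, hsecond]; ring
  constructor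
  · intro hx
    have := key3
    rw [hx, sub_self, inner_zero_left] at this
    linarith
  · intro hk
    rw [hk, neg_zero] at key3
    -- linear algebra: the three vectors form a basis since det ≠ 0
    set M : Matrix (Fin 3) (Fin 3) ℝ :=
      Matrix.of (fun i j => ![e3 t, deriv e3 t, iteratedDeriv 2 e3 t] i j) with hM
    have hMdet : M.det ≠ 0 := by
      have : M = Matrix.transpose (Matrix.of (fun i j =>
          ![e3 t, deriv e3 t, iteratedDeriv 2 e3 t] j i)) := by
        ext i j; rfl
      rw [this, Matrix.det_transpose]
      exact hΔ
    have hmv : M.mulVec (fun i => (x - γ t) i) = 0 := by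
      funext i
      have hinner : ∀ v : EuclideanSpace ℝ (Fin 3),
          ⟪x - γ t, v⟫ = ∑ j, v j * (x - γ t) j := by
        intro v
        rw [real_inner_comm]
        simp [PiLp.inner_apply, RCLike.inner_apply]
        exact Finset.sum_congr rfl (fun j _ => mul_comm _ _)
      fin_cases i
      · have := key1; rw [hinner] at this
        simpa [Matrix.mulVec, dotProduct, M] using this
      · have := key2; rw [hinner] at this
        simpa [Matrix.mulVec, dotProduct, M] using this
      · have := key3; rw [hinner] at this
        simpa [Matrix.mulVec, dotProduct, M] using this
    have hy0 : (fun i => (x - γ t) i) = 0 := Matrix.eq_zero_of_mulVec_eq_zero hMdet hmv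
    have : x - γ t = 0 := by
      ext i; exact congrFun hy0 i
    exact sub_eq_zero.mp this
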